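/- Let R be an associative unital ℂ-algebra, ε : R → ℂ a ℂ-linear map, c ∈ ℂ, n ≥ 2, and 1 ≤ i ≠ j ≤ n. Let M be a module over the Lie algebra 𝔤𝔩_n(R) and let v ∈ M satisfy (E_{ii}a − E_{jj}a)·v = c·ε(a)·v for all a ∈ R. Suppose P ∈ R satisfies (E_{ij}P)·v = 0. Then: (a) (E_{ij}(PQ + QP))·v = 0 for every Q ∈ R; and (b) if moreover Q lies in the ℂ-linear span of the commutators {xy − yx : x, y ∈ R}, then (E_{ij}(PQ))·v = 0 and (E_{ij}(QP))·v = 0. -/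

import Mathlib

/-!
STATEMENT 15: Let `R` be an associative unital ℂ-algebra, `ε : R → ℂ` a ℂ-linear map,
`c ∈ ℂ`, `n ≥ 2`, `i ≠ j`.  Let `M` be a module over the Lie algebra `𝔤𝔩_n(R)` and
`v ∈ M` with `(E_{ii}a − E_{jj}a)·v = c·ε(a)·v` for all `a ∈ R`.  If `P ∈ R` satisfies
`(E_{ij}P)·v = 0`, then: (a) `(E_{ij}(PQ + QP))·v = 0` for every `Q ∈ R`; and
(b) if `Q` lies in the ℂ-linear span of the commutators of `R`, then
`(E_{ij}(PQ))·v = 0` and `(E_{ij}(QP))·v = 0`.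
-/

attribute [local instance 100] LieRing.ofAssociativeRing

theorem stmt_15 (R : Type) [Ring R] [Algebra ℂ R] (ε : R →ₗ[ℂ] ℂ) (c : ℂ)
    (n : ℕ) (hn : 2 ≤ n) (i j : Fin n) (hij : i ≠ j)
    (M : Type) [AddCommGroup M] [Module ℂ M]
    [LieRingModule (Matrix (Fin n) (Fin n) R) M]
    [LieModule ℂ (Matrix (Fin n) (Fin n) R) M]
    (v : M)
    (h2 : ∀ a : R, ⁅Matrix.single i i a - Matrix.single j j a, v⁆
            = (c * ε a) • v)
    (P : R) (hP : ⁅Matrix.single i j P, v⁆ = 0) :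
    (∀ Q : R, ⁅Matrix.single i j (P * Q + Q * P), v⁆ = 0)
    ∧ (∀ Q ∈ Submodule.span ℂ {x : R | ∃ a b : R, x = a * b - b * a},
        ⁅Matrix.single i j (P * Q), v⁆ = 0
        ∧ ⁅Matrix.single i j (Q * P), v⁆ = 0) := by
  -- the linear map X ↦ ⁅E_{ij} X, v⁆
  set F : R →ₗ[ℂ] M :=
    { toFun := fun X => ⁅Matrix.single i j X, v⁆
      map_add' := fun X Y => by
        simp only [Matrix.single_add, add_lie]
      map_smul' := fun r X => by
        simp only [RingHom.id_apply, ← Matrix.smul_single, smul_lie] } with hF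
  have hFdef : ∀ X : R, F X = ⁅Matrix.single i j X, v⁆ := fun X => rfl
  -- the key bracket computation
  have key : ∀ a X : R,
      ⁅Matrix.single i i a - Matrix.single j j a,
        Matrix.single i j X⁆
      = Matrix.single i j (a * X + X * a) := by
    intro a X
    simp only [Ring.lie_def, Matrix.single_add, sub_mul, mul_sub,
      Matrix.single_mul_single_same, Matrix.single_mul_single_of_ne, ne_eq, hij.symm, not_false_eq_true,
       sub_zero, zero_sub,
      sub_neg_eq_add]
  -- the step: if F X = 0 then F (aX + Xa) = 0
  have step : ∀ X : R, F X = 0 → ∀ a : R, F (a * X + X * a) = 0 := by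
    intro X hX a
    have := lie_lie (Matrix.single i i a - Matrix.single j j a)
      (Matrix.single i j X) v
    rw [key a X, h2 a, lie_smul] at this
    rw [hFdef] at hX ⊢
    rw [this, hX]
    simp
  have hPF : F P = 0 := hP
  -- part (a)
  have parta : ∀ Q : R, F (P * Q + Q * P) = 0 := by
    intro Q
    have := step P hPF Q
    rwa [add_comm] at this
  refine ⟨parta, ?_⟩
  -- part (b)
  have genPQ : ∀ Q ∈ {x : R | ∃ a b : R, x = a * b - b * a}, F (P * Q) = 0 := by
    rintro Q ⟨a, b, rfl⟩
    have h1 := step _ (step P hPF a) b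
    have h3 := step _ (step P hPF b) a
    have h4 := step P hPF (a * b)
    have h5 := step P hPF (b * a)
    have hsum : F (P * (a * b - b * a)) + F (P * (a * b - b * a)) = 0 := by
      have : F (P * (a * b - b * a)) + F (P * (a * b - b * a))
          = F ((b * (a * P + P * a) + (a * P + P * a) * b)
              - (a * (b * P + P * b) + (b * P + P * b) * a)
              + ((a * b) * P + P * (a * b))
              - ((b * a) * P + P * (b * a))) := by
        rw [← map_add]
        congr 1
        noncomm_ring
      rw [this, map_sub, map_add, map_sub, h1, h3, h4, h5]
      simp
    have h2smul : (2 : ℂ) • F (P * (a * b - b * a)) = 0 := by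
      rw [two_smul]; exact hsum
    have := smul_eq_zero.mp h2smul
    rcases this with h | h
    · norm_num at h
    · exact h
  intro Q hQ
  have main : F (P * Q) = 0 := by
    induction hQ using Submodule.span_induction with
    | mem x hx => exact genPQ x hx
    | zero => simp
    | add x y _ _ hx hy => rw [mul_add, map_add, hx, hy, add_zero]
    | smul r x _ hx => rw [mul_smul_comm, map_smul, hx, smul_zero]
  refine ⟨main, ?_⟩
  have h' : F (Q * P) = F (P * Q + Q * P) - F (P * Q) := by rw [map_add]; abel
  show F (Q * P) = 0
  rw [h', parta Q, main, sub_zero]
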